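/- Let p ≥ 5 be a prime, e ≥ 1 an integer, and A, B ∈ ℤ. Let x₀, y₀ ∈ ℤ/pℤ satisfy y₀² = x₀³ + A·x₀ + B and assume the point is nonsingular, i.e. it is not the case that both 3·x₀² + A = 0 and 2·y₀ = 0 in ℤ/pℤ. Then the number of pairs (X, Y) ∈ (ℤ/p^eℤ)² with Y² = X³ + A·X + B in ℤ/p^eℤ and with X ≡ x₀ and Y ≡ y₀ under the reduction map ℤ/p^eℤ → ℤ/pℤ is exactly p^(e−1). -/

import Mathlib

lemma intCast_zmod_eq_iff_dvd (M : ℕ) (a b : ℤ) :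
    ((a : ZMod M) = (b : ZMod M)) ↔ (M : ℤ) ∣ a - b := by
  rw [ZMod.intCast_eq_intCast_iff, Int.modEq_iff_dvd, dvd_sub_comm]


lemma card_linear {p : ℕ} (hp : p.Prime) (a b c : ZMod p) (hab : a ≠ 0 ∨ b ≠ 0) :
    Nat.card {st : ZMod p × ZMod p // a * st.1 + b * st.2 = c} = p := by
  haveI : Fact p.Prime := ⟨hp⟩
  rcases eq_or_ne b 0 with hb | hb
  · have ha : a ≠ 0 := by tauto
    have e : ZMod p ≃ {st : ZMod p × ZMod p // a * st.1 + b * st.2 = c} :=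
      { toFun := fun t => ⟨(a⁻¹ * c, t), by subst hb; field_simp; ring⟩
        invFun := fun q => q.1.2
        left_inv := fun t => rfl
        right_inv := fun q => by
          rcases q with ⟨⟨s, t⟩, h⟩
          subst hb
          simp only [zero_mul, add_zero] at h
          simp only [Subtype.mk.injEq, Prod.mk.injEq, and_true]
          field_simp [← h]; exact h.symm }
    rw [← Nat.card_congr e, Nat.card_zmod]
  · have e : ZMod p ≃ {st : ZMod p × ZMod p // a * st.1 + b * st.2 = c} :=
      { toFun := fun s => ⟨(s, b⁻¹ * (c - a * s)), by field_simp; ring⟩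
        invFun := fun q => q.1.1
        left_inv := fun s => rfl
        right_inv := fun q => by
          rcases q with ⟨⟨s, t⟩, h⟩
          simp only [Subtype.mk.injEq, Prod.mk.injEq, true_and]
          field_simp
          linear_combination -h }
    rw [← Nat.card_congr e, Nat.card_zmod]

lemma step_card {p : ℕ} (hp : p.Prime) (f : ℕ) (A B : ℤ)
    (x y : ZMod (p ^ (f + 1)))
    (hxy : y ^ 2 = x ^ 3 + (A : ZMod (p ^ (f + 1))) * x + (B : ZMod (p ^ (f + 1))))
    (hns : ¬ (3 * (ZMod.castHom (dvd_pow_self p (Nat.succ_ne_zero f)) (ZMod p) x) ^ 2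
            + (A : ZMod p) = 0 ∧
        2 * (ZMod.castHom (dvd_pow_self p (Nat.succ_ne_zero f)) (ZMod p) y) = 0)) :
    Nat.card {q : ZMod (p ^ (f + 2)) × ZMod (p ^ (f + 2)) //
        q.2 ^ 2 = q.1 ^ 3 + (A : ZMod (p ^ (f + 2))) * q.1 + (B : ZMod (p ^ (f + 2))) ∧
        ZMod.castHom (pow_dvd_pow p (Nat.le_succ (f + 1))) (ZMod (p ^ (f + 1))) q.1 = x ∧
        ZMod.castHom (pow_dvd_pow p (Nat.le_succ (f + 1))) (ZMod (p ^ (f + 1))) q.2 = y} = p := by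
  haveI : NeZero (p ^ (f + 1)) := ⟨pow_ne_zero _ hp.ne_zero⟩
  haveI : NeZero (p ^ (f + 2)) := ⟨pow_ne_zero _ hp.ne_zero⟩
  haveI : Fact p.Prime := ⟨hp⟩
  obtain ⟨xv, rfl⟩ := ZMod.intCast_surjective (n := p ^ (f + 1)) x
  obtain ⟨yv, rfl⟩ := ZMod.intCast_surjective (n := p ^ (f + 1)) y
  have hNZ : ((p : ℤ) ^ (f + 1)) ≠ 0 := pow_ne_zero _ (by exact_mod_cast hp.ne_zero)
  -- the constant d
  have hdvd : ((p : ℤ) ^ (f + 1)) ∣ yv ^ 2 - xv ^ 3 - A * xv - B := by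
    have h0 : ((yv ^ 2 - xv ^ 3 - A * xv - B : ℤ) : ZMod (p ^ (f + 1))) = 0 := by
      push_cast
      linear_combination hxy
    exact_mod_cast (ZMod.intCast_zmod_eq_zero_iff_dvd _ _).mp h0
  obtain ⟨d, hd⟩ := hdvd
  set a : ℤ := 3 * xv ^ 2 + A with ha
  set b : ℤ := 2 * yv with hb
  have ident : ∀ u v : ℤ,
      (yv + (p : ℤ) ^ (f + 1) * v) ^ 2 - (xv + (p : ℤ) ^ (f + 1) * u) ^ 3
          - A * (xv + (p : ℤ) ^ (f + 1) * u) - B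
        = (p : ℤ) ^ (f + 1) * (d + b * v - a * u)
          + ((p : ℤ) ^ (f + 1)) ^ 2 * (v ^ 2 - 3 * xv * u ^ 2 - (p : ℤ) ^ (f + 1) * u ^ 3) := by
    intro u v
    linear_combination hd
  have keyM : ∀ u v : ℤ, (p : ℤ) ∣ (d + b * v - a * u) →
      ((p : ℤ) ^ (f + 2)) ∣ (yv + (p : ℤ) ^ (f + 1) * v) ^ 2
        - (xv + (p : ℤ) ^ (f + 1) * u) ^ 3 - A * (xv + (p : ℤ) ^ (f + 1) * u) - B := by
    rintro u v ⟨k, hk⟩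
    refine ⟨k + (p : ℤ) ^ f
        * (v ^ 2 - 3 * xv * u ^ 2 - (p : ℤ) ^ (f + 1) * u ^ 3), ?_⟩
    rw [ident u v, hk]
    ring
  have keyP : ∀ u v : ℤ,
      ((p : ℤ) ^ (f + 2)) ∣ (yv + (p : ℤ) ^ (f + 1) * v) ^ 2
        - (xv + (p : ℤ) ^ (f + 1) * u) ^ 3 - A * (xv + (p : ℤ) ^ (f + 1) * u) - B →
      (p : ℤ) ∣ (d + b * v - a * u) := by
    rintro u v ⟨k, hk⟩
    rw [ident u v] at hk
    have h1 : (p : ℤ) ^ (f + 1) * (d + b * v - a * u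
          + (p : ℤ) ^ (f + 1) * (v ^ 2 - 3 * xv * u ^ 2 - (p : ℤ) ^ (f + 1) * u ^ 3))
        = (p : ℤ) ^ (f + 1) * ((p : ℤ) * k) := by
      have hpow : ((p : ℤ)) ^ (f + 2) = (p : ℤ) ^ (f + 1) * p := by ring
      linear_combination hk + k * hpow
    have h2 := mul_left_cancel₀ hNZ h1
    exact ⟨k - (p : ℤ) ^ f * (v ^ 2 - 3 * xv * u ^ 2 - (p : ℤ) ^ (f + 1) * u ^ 3),
      by linear_combination h2⟩
  -- nonsingularity in terms of a, b
  have hab : (((-a : ℤ) : ZMod p) ≠ 0) ∨ ((b : ℤ) : ZMod p) ≠ 0 := by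
    by_contra hcon
    push_neg at hcon
    obtain ⟨h1, h2⟩ := hcon
    rw [Int.cast_neg, neg_eq_zero] at h1
    apply hns
    rw [ha] at h1; rw [hb] at h2
    push_cast at h1 h2
    constructor
    · rw [map_intCast]; linear_combination h1
    · rw [map_intCast]; linear_combination h2
  -- value lemma
  have hval : ∀ s : ZMod p, ((s.val : ℕ) : ZMod p) = s := fun s => by
    rw [ZMod.natCast_val, ZMod.cast_id]
  have hvdvd : ∀ (s : ZMod p) (u : ℤ), s = (u : ZMod p) → (p : ℤ) ∣ ((s.val : ℤ) - u) := by
    intro s u hs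
    rw [← intCast_zmod_eq_iff_dvd]
    push_cast
    rw [hval s, hs]
  have hNzero : ((p : ZMod (p ^ (f + 1))) ^ (f + 1)) = 0 := by
    rw [← Nat.cast_pow, ZMod.natCast_self]
  -- membership of the lifted points
  have hmem : ∀ s t : ZMod p,
      ((-a : ℤ) : ZMod p) * s + ((b : ℤ) : ZMod p) * t = ((-d : ℤ) : ZMod p) →
      (((yv + (p : ℤ) ^ (f + 1) * (t.val : ℤ) : ℤ) : ZMod (p ^ (f + 2))) ^ 2
        = ((xv + (p : ℤ) ^ (f + 1) * (s.val : ℤ) : ℤ) : ZMod (p ^ (f + 2))) ^ 3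
          + (A : ZMod (p ^ (f + 2)))
            * ((xv + (p : ℤ) ^ (f + 1) * (s.val : ℤ) : ℤ) : ZMod (p ^ (f + 2)))
          + (B : ZMod (p ^ (f + 2)))) ∧
      ZMod.castHom (pow_dvd_pow p (Nat.le_succ (f + 1))) (ZMod (p ^ (f + 1)))
        ((xv + (p : ℤ) ^ (f + 1) * (s.val : ℤ) : ℤ) : ZMod (p ^ (f + 2))) = (xv : ZMod (p ^ (f + 1))) ∧
      ZMod.castHom (pow_dvd_pow p (Nat.le_succ (f + 1))) (ZMod (p ^ (f + 1)))
        ((yv + (p : ℤ) ^ (f + 1) * (t.val : ℤ) : ℤ) : ZMod (p ^ (f + 2))) = (yv : ZMod (p ^ (f + 1))) := by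
    intro s t hlin
    have hpd : (p : ℤ) ∣ (d + b * (t.val : ℤ) - a * (s.val : ℤ)) := by
      rw [← ZMod.intCast_zmod_eq_zero_iff_dvd]
      have hlin' := hlin
      push_cast at hlin' ⊢
      rw [hval s, hval t]
      linear_combination hlin'
    refine ⟨?_, ?_, ?_⟩
    · have h0 := (ZMod.intCast_zmod_eq_zero_iff_dvd
        ((yv + (p : ℤ) ^ (f + 1) * (t.val : ℤ)) ^ 2 - (xv + (p : ℤ) ^ (f + 1) * (s.val : ℤ)) ^ 3
          - A * (xv + (p : ℤ) ^ (f + 1) * (s.val : ℤ)) - B) (p ^ (f + 2))).mpr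
        (by exact_mod_cast keyM (s.val : ℤ) (t.val : ℤ) hpd)
      push_cast at h0 ⊢
      linear_combination h0
    · rw [map_intCast]
      push_cast
      rw [hNzero]
      ring
    · rw [map_intCast]
      push_cast
      rw [hNzero]
      ring
  refine Eq.trans (Eq.symm (Nat.card_eq_of_bijective
    (fun st : {st : ZMod p × ZMod p //
        ((-a : ℤ) : ZMod p) * st.1 + ((b : ℤ) : ZMod p) * st.2 = ((-d : ℤ) : ZMod p)} =>
      ⟨(((xv + (p : ℤ) ^ (f + 1) * (st.1.1.val : ℤ) : ℤ) : ZMod (p ^ (f + 2))),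
        ((yv + (p : ℤ) ^ (f + 1) * (st.1.2.val : ℤ) : ℤ) : ZMod (p ^ (f + 2)))),
       hmem st.1.1 st.1.2 st.2⟩) ⟨?_, ?_⟩))
    (card_linear hp ((-a : ℤ) : ZMod p) ((b : ℤ) : ZMod p) ((-d : ℤ) : ZMod p) hab)
  · -- injective
    rintro ⟨⟨s, t⟩, h⟩ ⟨⟨s', t'⟩, h'⟩ hEq
    simp only [Subtype.mk.injEq, Prod.mk.injEq] at hEq
    obtain ⟨h1, h2⟩ := hEq
    rw [intCast_zmod_eq_iff_dvd] at h1 h2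
    push_cast at h1 h2
    obtain ⟨k, hk⟩ := h1
    obtain ⟨l, hl⟩ := h2
    have hs : ((s.val : ℤ)) - (s'.val : ℤ) = (p : ℤ) * k :=
      mul_left_cancel₀ hNZ (by linear_combination hk)
    have ht : ((t.val : ℤ)) - (t'.val : ℤ) = (p : ℤ) * l :=
      mul_left_cancel₀ hNZ (by linear_combination hl)
    have hs2 : s = s' := by
      have := (intCast_zmod_eq_iff_dvd p (s.val : ℤ) (s'.val : ℤ)).mpr ⟨k, hs⟩
      push_cast at this
      rwa [hval, hval] at this
    have ht2 : t = t' := by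
      have := (intCast_zmod_eq_iff_dvd p (t.val : ℤ) (t'.val : ℤ)).mpr ⟨l, ht⟩
      push_cast at this
      rwa [hval, hval] at this
    exact Subtype.ext (Prod.ext hs2 ht2)
  · -- surjective
    rintro ⟨⟨X, Y⟩, hF, hX, hY⟩
    have hXv : (((X.val : ℤ)) : ZMod (p ^ (f + 2))) = X := by
      push_cast
      rw [ZMod.natCast_val, ZMod.cast_id]
    have hYv : (((Y.val : ℤ)) : ZMod (p ^ (f + 2))) = Y := by
      push_cast
      rw [ZMod.natCast_val, ZMod.cast_id]
    have hXd : ((X.val : ℤ) : ZMod (p ^ (f + 1))) = ((xv : ℤ) : ZMod (p ^ (f + 1))) := by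
      rw [← hX, ZMod.castHom_apply, ← ZMod.natCast_val]
      push_cast
      ring
    have hYd : ((Y.val : ℤ) : ZMod (p ^ (f + 1))) = ((yv : ℤ) : ZMod (p ^ (f + 1))) := by
      rw [← hY, ZMod.castHom_apply, ← ZMod.natCast_val]
      push_cast
      ring
    rw [intCast_zmod_eq_iff_dvd] at hXd hYd
    push_cast at hXd hYd
    obtain ⟨u, hu⟩ := hXd
    obtain ⟨v, hv⟩ := hYd
    have hXeq : X = ((xv + (p : ℤ) ^ (f + 1) * u : ℤ) : ZMod (p ^ (f + 2))) := by
      rw [← hXv, show (X.val : ℤ) = xv + (p : ℤ) ^ (f + 1) * u by linarith]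
    have hYeq : Y = ((yv + (p : ℤ) ^ (f + 1) * v : ℤ) : ZMod (p ^ (f + 2))) := by
      rw [← hYv, show (Y.val : ℤ) = yv + (p : ℤ) ^ (f + 1) * v by linarith]
    rw [hXeq, hYeq] at hF
    have h0 : (((yv + (p : ℤ) ^ (f + 1) * v) ^ 2 - (xv + (p : ℤ) ^ (f + 1) * u) ^ 3
        - A * (xv + (p : ℤ) ^ (f + 1) * u) - B : ℤ) : ZMod (p ^ (f + 2))) = 0 := by
      push_cast at hF ⊢
      linear_combination hF
    have hdv : ((p : ℤ) ^ (f + 2)) ∣ (yv + (p : ℤ) ^ (f + 1) * v) ^ 2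
        - (xv + (p : ℤ) ^ (f + 1) * u) ^ 3 - A * (xv + (p : ℤ) ^ (f + 1) * u) - B := by
      exact_mod_cast (ZMod.intCast_zmod_eq_zero_iff_dvd _ _).mp h0
    have hpd := keyP u v hdv
    have hlin : ((-a : ℤ) : ZMod p) * ((u : ZMod p)) + ((b : ℤ) : ZMod p) * ((v : ZMod p))
        = ((-d : ℤ) : ZMod p) := by
      have h1 : ((d + b * v - a * u : ℤ) : ZMod p) = 0 :=
        (ZMod.intCast_zmod_eq_zero_iff_dvd _ _).mpr (by exact_mod_cast hpd)
      push_cast at h1 ⊢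
      linear_combination h1
    refine ⟨⟨((u : ZMod p), (v : ZMod p)), hlin⟩, ?_⟩
    apply Subtype.ext
    apply Prod.ext
    · show ((xv + (p : ℤ) ^ (f + 1) * (((u : ZMod p)).val : ℤ) : ℤ) : ZMod (p ^ (f + 2))) = X
      obtain ⟨k, hk⟩ := hvdvd (u : ZMod p) u rfl
      rw [hXeq, intCast_zmod_eq_iff_dvd]
      push_cast
      exact ⟨k, by linear_combination (p : ℤ) ^ (f + 1) * hk⟩
    · show ((yv + (p : ℤ) ^ (f + 1) * (((v : ZMod p)).val : ℤ) : ℤ) : ZMod (p ^ (f + 2))) = Y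
      obtain ⟨l, hl⟩ := hvdvd (v : ZMod p) v rfl
      rw [hYeq, intCast_zmod_eq_iff_dvd]
      push_cast
      exact ⟨l, by linear_combination (p : ℤ) ^ (f + 1) * hl⟩

lemma count_aux {p : ℕ} (hp : p.Prime) (A B : ℤ) (x₀ y₀ : ZMod p)
    (heq : y₀ ^ 2 = x₀ ^ 3 + (A : ZMod p) * x₀ + (B : ZMod p))
    (hns : ¬ (3 * x₀ ^ 2 + (A : ZMod p) = 0 ∧ 2 * y₀ = 0)) :
    ∀ f : ℕ, Nat.card {q : ZMod (p ^ (f + 1)) × ZMod (p ^ (f + 1)) //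
        q.2 ^ 2 = q.1 ^ 3 + (A : ZMod (p ^ (f + 1))) * q.1 + (B : ZMod (p ^ (f + 1))) ∧
        ZMod.castHom (dvd_pow_self p (Nat.succ_ne_zero f)) (ZMod p) q.1 = x₀ ∧
        ZMod.castHom (dvd_pow_self p (Nat.succ_ne_zero f)) (ZMod p) q.2 = y₀} = p ^ f := by
  haveI : Fact p.Prime := ⟨hp⟩
  haveI : NeZero p := ⟨hp.ne_zero⟩
  intro f
  induction f with
  | zero =>
    haveI : NeZero (p ^ 1) := ⟨pow_ne_zero _ hp.ne_zero⟩
    have hinj : Function.Injective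
        (ZMod.castHom (dvd_pow_self p (Nat.succ_ne_zero 0)) (ZMod p)) := by
      intro u w huw
      apply ZMod.val_injective
      have h1 : ((u.val : ℕ) : ZMod p) = ((w.val : ℕ) : ZMod p) := by
        rw [ZMod.natCast_val, ZMod.natCast_val,
          ← ZMod.castHom_apply (h := dvd_pow_self p (Nat.succ_ne_zero 0)),
          ← ZMod.castHom_apply (h := dvd_pow_self p (Nat.succ_ne_zero 0)), huw]
      have hu : u.val < p := lt_of_lt_of_eq (ZMod.val_lt u) (pow_one p)
      have hw : w.val < p := lt_of_lt_of_eq (ZMod.val_lt w) (pow_one p)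
      rw [← ZMod.val_cast_of_lt hu, ← ZMod.val_cast_of_lt hw, h1]
    have hcast1 : ZMod.castHom (dvd_pow_self p (Nat.succ_ne_zero 0)) (ZMod p)
        ((x₀.val : ℕ) : ZMod (p ^ 1)) = x₀ := by
      rw [map_natCast, ZMod.natCast_val, ZMod.cast_id]
    have hcast2 : ZMod.castHom (dvd_pow_self p (Nat.succ_ne_zero 0)) (ZMod p)
        ((y₀.val : ℕ) : ZMod (p ^ 1)) = y₀ := by
      rw [map_natCast, ZMod.natCast_val, ZMod.cast_id]
    have hq : (((y₀.val : ℕ) : ZMod (p ^ 1))) ^ 2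
        = (((x₀.val : ℕ) : ZMod (p ^ 1))) ^ 3
          + (A : ZMod (p ^ 1)) * (((x₀.val : ℕ) : ZMod (p ^ 1))) + (B : ZMod (p ^ 1)) := by
      apply hinj
      simp only [map_pow, map_add, map_mul, map_intCast, hcast1, hcast2]
      exact heq
    rw [pow_zero]
    rw [Nat.card_eq_one_iff_exists]
    refine ⟨⟨(((x₀.val : ℕ) : ZMod (p ^ 1)), ((y₀.val : ℕ) : ZMod (p ^ 1))),
      hq, hcast1, hcast2⟩, ?_⟩
    rintro ⟨⟨u, w⟩, hq', hu, hw⟩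
    apply Subtype.ext
    apply Prod.ext
    · exact hinj (by rw [hu, hcast1])
    · exact hinj (by rw [hw, hcast2])
  | succ f ih =>
    haveI : NeZero (p ^ (f + 1)) := ⟨pow_ne_zero _ hp.ne_zero⟩
    haveI : NeZero (p ^ (f + 2)) := ⟨pow_ne_zero _ hp.ne_zero⟩
    classical
    set T := {q : ZMod (p ^ (f + 1)) × ZMod (p ^ (f + 1)) //
        q.2 ^ 2 = q.1 ^ 3 + (A : ZMod (p ^ (f + 1))) * q.1 + (B : ZMod (p ^ (f + 1))) ∧
        ZMod.castHom (dvd_pow_self p (Nat.succ_ne_zero f)) (ZMod p) q.1 = x₀ ∧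
        ZMod.castHom (dvd_pow_self p (Nat.succ_ne_zero f)) (ZMod p) q.2 = y₀} with hT
    set S := {q : ZMod (p ^ (f + 2)) × ZMod (p ^ (f + 2)) //
        q.2 ^ 2 = q.1 ^ 3 + (A : ZMod (p ^ (f + 2))) * q.1 + (B : ZMod (p ^ (f + 2))) ∧
        ZMod.castHom (dvd_pow_self p (Nat.succ_ne_zero (f + 1))) (ZMod p) q.1 = x₀ ∧
        ZMod.castHom (dvd_pow_self p (Nat.succ_ne_zero (f + 1))) (ZMod p) q.2 = y₀} with hS
    have hcomp : ∀ z : ZMod (p ^ (f + 2)),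
        ZMod.castHom (dvd_pow_self p (Nat.succ_ne_zero f)) (ZMod p)
          (ZMod.castHom (pow_dvd_pow p (Nat.le_succ (f + 1))) (ZMod (p ^ (f + 1))) z)
        = ZMod.castHom (dvd_pow_self p (Nat.succ_ne_zero (f + 1))) (ZMod p) z := by
      intro z
      exact RingHom.congr_fun (ZMod.castHom_comp (dvd_pow_self p (Nat.succ_ne_zero f))
        (pow_dvd_pow p (Nat.le_succ (f + 1)))) z
    let ρ : S → T := fun q =>
      ⟨(ZMod.castHom (pow_dvd_pow p (Nat.le_succ (f + 1))) (ZMod (p ^ (f + 1))) q.1.1,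
        ZMod.castHom (pow_dvd_pow p (Nat.le_succ (f + 1))) (ZMod (p ^ (f + 1))) q.1.2),
       by
        have := congrArg (ZMod.castHom (pow_dvd_pow p (Nat.le_succ (f + 1)))
          (ZMod (p ^ (f + 1)))) q.2.1
        simpa only [map_pow, map_add, map_mul, map_intCast] using this,
       by rw [hcomp]; exact q.2.2.1,
       by rw [hcomp]; exact q.2.2.2⟩
    have hfiber : ∀ t : T, Nat.card {s : S // ρ s = t} = p := by
      intro t
      have efib : {s : S // ρ s = t} ≃
          {q : ZMod (p ^ (f + 2)) × ZMod (p ^ (f + 2)) //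
            q.2 ^ 2 = q.1 ^ 3 + (A : ZMod (p ^ (f + 2))) * q.1 + (B : ZMod (p ^ (f + 2))) ∧
            ZMod.castHom (pow_dvd_pow p (Nat.le_succ (f + 1))) (ZMod (p ^ (f + 1))) q.1 = t.1.1 ∧
            ZMod.castHom (pow_dvd_pow p (Nat.le_succ (f + 1))) (ZMod (p ^ (f + 1))) q.2 = t.1.2} :=
        { toFun := fun s => ⟨s.1.1, s.1.2.1,
            congrArg (fun w : T => w.1.1) s.2, congrArg (fun w : T => w.1.2) s.2⟩
          invFun := fun q => ⟨⟨q.1, q.2.1,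
            by rw [← hcomp, q.2.2.1]; exact t.2.2.1,
            by rw [← hcomp, q.2.2.2]; exact t.2.2.2⟩,
            Subtype.ext (Prod.ext q.2.2.1 q.2.2.2)⟩
          left_inv := fun s => rfl
          right_inv := fun q => rfl }
      rw [Nat.card_congr efib]
      exact step_card hp f A B t.1.1 t.1.2 t.2.1
        (by rw [t.2.2.1, t.2.2.2]; exact hns)
    have h1 : Nat.card S = Nat.card (Σ t : T, {s : S // ρ s = t}) :=
      (Nat.card_congr (Equiv.sigmaFiberEquiv ρ)).symm
    calc Nat.card S = ∑ t : T, Nat.card {s : S // ρ s = t} := by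
          rw [h1, Nat.card_eq_fintype_card, Fintype.card_sigma]
          exact Finset.sum_congr rfl fun t _ => (Nat.card_eq_fintype_card).symm
      _ = ∑ _t : T, p := Finset.sum_congr rfl fun t _ => hfiber t
      _ = Fintype.card T * p := by rw [Finset.sum_const, smul_eq_mul, Finset.card_univ]
      _ = p ^ f * p := by rw [← Nat.card_eq_fintype_card, ih]
      _ = p ^ (f + 1) := by rw [pow_succ]

/-- Each nonsingular affine point of a Weierstrass curve over `𝔽_p` has exactly `p^(e-1)`
lifts to an affine point over `ℤ/p^eℤ`. -/
theorem card_affine_lifts_eq_pow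
    {p : ℕ} (hp : p.Prime) (hp5 : 5 ≤ p) {e : ℕ} (he : 1 ≤ e)
    (A B : ℤ) (x₀ y₀ : ZMod p)
    (heq : y₀ ^ 2 = x₀ ^ 3 + (A : ZMod p) * x₀ + (B : ZMod p))
    (hns : ¬ (3 * x₀ ^ 2 + (A : ZMod p) = 0 ∧ 2 * y₀ = 0)) :
    Nat.card {q : ZMod (p ^ e) × ZMod (p ^ e) //
        q.2 ^ 2 = q.1 ^ 3 + (A : ZMod (p ^ e)) * q.1 + (B : ZMod (p ^ e)) ∧
        ZMod.castHom (dvd_pow_self p (by omega : e ≠ 0)) (ZMod p) q.1 = x₀ ∧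
        ZMod.castHom (dvd_pow_self p (by omega : e ≠ 0)) (ZMod p) q.2 = y₀} =
      p ^ (e - 1) := by
  obtain ⟨f, rfl⟩ : ∃ f, e = f + 1 := ⟨e - 1, by omega⟩
  have h := count_aux hp A B x₀ y₀ heq hns f
  simpa [Nat.add_sub_cancel] using h
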